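/- Let A₀ > 0 and let Ã : [0,∞) → ℝ be twice continuously differentiable with Ã(0) = A₀, Ã'(0) = 0, and Ã''(y) = −((y²/16) Ã(y) + (y/4) Ã(y)³ + (3/16) Ã(y)⁵) for all y ≥ 0. Suppose n₁ > 0 satisfies Ã(n₁) = 0 and Ã(y) > 0 for all y ∈ [0, n₁). Then for every y > n₁, (1/(2y)) Ã'(y)² + (y/32) Ã(y)² ≤ (n₁/32) A₀² + (1/16) A₀⁴ + (1/(32 n₁)) A₀⁶ + (1/(2 n₁)) A₀ · ((1/16) A₀² + (1/(8 n₁)) A₀⁴ + (1/(16 n₁²)) A₀⁶)^{1/2}. -/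

import Mathlib

private lemma aux_two {a b : ℝ} (ha : 0 ≤ a) (hab : a ≤ b) (h : 32 ≤ a*b) : 2 ≤ b := by
  nlinarith

private lemma tan6 (t c : ℝ) (ht : 0 ≤ t) (hc : 0 ≤ c) : 6*c^5*t - 5*c^6 ≤ t^6 := by
  nlinarith [mul_nonneg (sq_nonneg (t-c)) (show (0:ℝ) ≤ t^4+2*c*t^3+3*c^2*t^2+4*c^3*t+5*c^4 by
    have h1 : 0 ≤ c*t^3 := by positivity
    have h2 : 0 ≤ c^2*t^2 := by positivity
    have h3 : 0 ≤ c^3*t := by positivity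
    have h4 : 0 ≤ t^4 := by positivity
    have h5 : 0 ≤ c^4 := by positivity
    nlinarith)]

private lemma tan4 (t c : ℝ) (ht : 0 ≤ t) (hc : 0 ≤ c) : 4*c^3*t - 3*c^4 ≤ t^4 := by
  nlinarith [mul_nonneg (sq_nonneg (t-c)) (show (0:ℝ) ≤ t^2+2*c*t+3*c^2 by positivity)]

private lemma P1lem (n c : ℝ) (hn : 0 < n) (hc : 0 < c)
    (hC : 2 ≤ n^4/16 + n^3*c^2/4 + 3*n^2*c^4/16) :
    4*(n + c^2) ≤ 2*n^3 + 9*n^2*c^2 + 6*n*c^4 := by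
  have h32 : 32 ≤ (n^2+n*c^2)*(n^2+3*n*c^2) := by nlinarith
  have hβ : 2 ≤ n^2+3*n*c^2 := by
    have hβ0 : (0:ℝ) ≤ n^2+n*c^2 := by positivity
    have hαβ : n^2+n*c^2 ≤ n^2+3*n*c^2 := by nlinarith [mul_nonneg hn.le (sq_nonneg c)]
    exact aux_two hβ0 hαβ h32
  nlinarith [mul_nonneg (show (0:ℝ) ≤ n+c^2 by positivity) (sub_nonneg.2 hβ),
    mul_nonneg (mul_nonneg hn.le hn.le) (sq_nonneg c)]

set_option maxHeartbeats 1600000 in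
private lemma alg_key (n c s w t y : ℝ) (hn : 0 < n) (hc : 0 < c)
    (hC : 2 ≤ n^4/16 + n^3*c^2/4 + 3*n^2*c^4/16)
    (hs : s = c/4 + c^3/(4*n)) (hw0 : 0 ≤ w) (hws : w ≤ s)
    (ht0 : 0 ≤ t) (ht4 : t ≤ 4*w) (hy : n ≤ y) :
    t*w/(2*y) ≤ t^4/16 + t^6/(32*y) + n*(s^2 - w^2)/2 + c*s/(2*n) := by
  have hy0 : 0 < y := lt_of_lt_of_le hn hy
  have hs0 : 0 < s := by rw [hs]; positivity
  have hslack : 0 ≤ n*(s^2 - w^2)/2 := by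
    nlinarith [mul_nonneg (sub_nonneg.2 hws) (add_nonneg (le_trans hw0 hws) hw0)]
  have hcs : 0 ≤ c*s/(2*n) := by positivity
  by_cases hcase : 16*w ≤ t^5
  · have h1 : t*w/(2*y) ≤ t^6/(32*y) := by
      rw [div_le_div_iff₀ (by positivity) (by positivity)]
      nlinarith [mul_le_mul_of_nonneg_left hcase ht0]
    have h2 : 0 ≤ t^4/16 := by positivity
    linarith
  · push_neg at hcase
    have hnum : 0 ≤ t*w/2 - t^6/32 := by nlinarith [mul_le_mul_of_nonneg_left hcase.le ht0]
    have hinv : (1:ℝ)/y ≤ 1/n := one_div_le_one_div_of_le hn hy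
    have hred : t*w/(2*y) - t^6/(32*y) ≤ t*w/(2*n) - t^6/(32*n) := by
      have e1 : t*w/(2*y) - t^6/(32*y) = (t*w/2 - t^6/32)*(1/y) := by ring
      have e2 : t*w/(2*n) - t^6/(32*n) = (t*w/2 - t^6/32)*(1/n) := by ring
      rw [e1, e2]
      exact mul_le_mul_of_nonneg_left hinv hnum
    have key3 : t*s ≤ t^6/16 + n*t^4/8 + c*s := by
      by_cases htc : t ≤ c
      · have h1 : t*s ≤ c*s := mul_le_mul_of_nonneg_right htc hs0.le
        have h2 : 0 ≤ t^6/16 := by positivity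
        have h3 : 0 ≤ n*t^4/8 := by positivity
        linarith
      · push_neg at htc
        have ht4s : t ≤ 4*s := le_trans ht4 (by linarith)
        have htan6 := tan6 t c ht0 hc.le
        have htan4 := tan4 t c ht0 hc.le
        have P1 : 4*(n + c^2) ≤ 2*n^3 + 9*n^2*c^2 + 6*n*c^4 := P1lem n c hn hc hC
        have hdiff : ((6*c^5*(4*s) - 5*c^6)/16 + n*(4*c^3*(4*s) - 3*c^4)/8) - (4*s - c)*s
            = (c^4*(2*n^3+9*n^2*c^2+6*n*c^4) - c^4*(4*(n+c^2)))/(16*n^2) := by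
          rw [hs]; field_simp; ring
        have E4 : (4*s - c)*s ≤ (6*c^5*(4*s) - 5*c^6)/16 + n*(4*c^3*(4*s) - 3*c^4)/8 := by
          have h0 : 0 ≤ ((6*c^5*(4*s) - 5*c^6)/16 + n*(4*c^3*(4*s) - 3*c^4)/8) - (4*s - c)*s := by
            rw [hdiff]
            apply div_nonneg _ (by positivity)
            nlinarith [mul_le_mul_of_nonneg_left P1 (show (0:ℝ) ≤ c^4 by positivity)]
          linarith
        have hlin : (6*c^5*t - 5*c^6)/16 + n*(4*c^3*t - 3*c^4)/8 ≤ t^6/16 + n*t^4/8 := by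
          nlinarith [mul_le_mul_of_nonneg_left htan4 hn.le]
        have h4sc : 0 < 4*s - c := by linarith
        have iden : (4*s - c)*(((6*c^5*t - 5*c^6)/16 + n*(4*c^3*t - 3*c^4)/8) - (t - c)*s)
            = (4*s - t)*(c^6/16 + n*c^4/8)
              + (t - c)*((((6*c^5*(4*s) - 5*c^6)/16 + n*(4*c^3*(4*s) - 3*c^4)/8)) - (4*s - c)*s) := by
          ring
        have hrhs : 0 ≤ (4*s - t)*(c^6/16 + n*c^4/8)
              + (t - c)*((((6*c^5*(4*s) - 5*c^6)/16 + n*(4*c^3*(4*s) - 3*c^4)/8)) - (4*s - c)*s) :=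
          add_nonneg (mul_nonneg (by linarith) (by positivity))
            (mul_nonneg (by linarith) (by linarith))
        rw [← iden] at hrhs
        have hX : 0 ≤ ((6*c^5*t - 5*c^6)/16 + n*(4*c^3*t - 3*c^4)/8) - (t - c)*s :=
          (mul_nonneg_iff_of_pos_left h4sc).mp hrhs
        nlinarith [hX, hlin]
    have hwstep : t*w + n^2*w^2 ≤ t*s + n^2*s^2 := by
      nlinarith [mul_nonneg (sub_nonneg.2 hws) (show (0:ℝ) ≤ t + n^2*(s+w) by positivity)]
    have key2 : t*w - t^6/16 ≤ n*t^4/8 + n^2*(s^2 - w^2) + c*s := by nlinarith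
    have e1 : t*w/(2*n) - t^6/(32*n) = (t*w - t^6/16)/(2*n) := by ring
    have e2 : t^4/16 + n*(s^2 - w^2)/2 + c*s/(2*n) = (n*t^4/8 + n^2*(s^2 - w^2) + c*s)/(2*n) := by
      field_simp; ring
    have hfin : (t*w - t^6/16)/(2*n) ≤ (n*t^4/8 + n^2*(s^2 - w^2) + c*s)/(2*n) := by
      gcongr
    linarith

set_option maxHeartbeats 4000000 in
/-- A priori bound for the reflected amplitude equation
`Ã'' = −((y²/16) Ã + (y/4) Ã³ + (3/16) Ã⁵)` with `Ã(0) = A₀ > 0`, `Ã'(0) = 0`: if `n₁`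
is the minimal positive zero of `Ã`, then for every `y > n₁`,
`(1/(2y)) Ã'(y)² + (y/32) Ã(y)²` is bounded by the stated explicit constant. -/
theorem stmt_9 (A₀ : ℝ) (hA₀ : 0 < A₀)
    (A : ℝ → ℝ) (hA : ContDiff ℝ 2 A) (h0 : A 0 = A₀) (h'0 : deriv A 0 = 0)
    (hODE : ∀ y : ℝ, 0 ≤ y →
      deriv (deriv A) y = -(y ^ 2 / 16 * A y + y / 4 * A y ^ 3 + 3 / 16 * A y ^ 5))
    (n₁ : ℝ) (hn₁ : 0 < n₁) (hzero : A n₁ = 0)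
    (hpos : ∀ y : ℝ, 0 ≤ y → y < n₁ → 0 < A y) :
    ∀ y : ℝ, n₁ < y →
      1 / (2 * y) * deriv A y ^ 2 + y / 32 * A y ^ 2 ≤
        n₁ / 32 * A₀ ^ 2 + 1 / 16 * A₀ ^ 4 + 1 / (32 * n₁) * A₀ ^ 6
          + 1 / (2 * n₁) * A₀ *
            Real.sqrt (1 / 16 * A₀ ^ 2 + 1 / (8 * n₁) * A₀ ^ 4
              + 1 / (16 * n₁ ^ 2) * A₀ ^ 6) := by
  have hd1 : Differentiable ℝ A := hA.differentiable (by norm_num)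
  have hd2 : Differentiable ℝ (deriv A) := by
    have := (contDiff_succ_iff_deriv (n:=1)).mp (by exact_mod_cast hA)
    exact this.2.2.differentiable one_ne_zero
  have hAy : ∀ z : ℝ, HasDerivAt A (deriv A z) z := fun z => (hd1 z).hasDerivAt
  have hA'' : ∀ z : ℝ, 0 ≤ z → HasDerivAt (deriv A)
      (-(z ^ 2 / 16 * A z + z / 4 * A z ^ 3 + 3 / 16 * A z ^ 5)) z := by
    intro z hz
    have := (hd2 z).hasDerivAt
    rwa [hODE z hz] at this
  -- energy function derivative
  have hE : ∀ z : ℝ, 0 ≤ z → HasDerivAt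
      (fun z => (deriv A z)^2/2 + z^2*(A z)^2/32 + z*(A z)^4/16 + (A z)^6/32)
      (z*(A z)^2/16 + (A z)^4/16) z := by
    intro z hz
    have H := ((((hA'' z hz).pow 2).div_const 2).add
        (((hasDerivAt_pow 2 z).mul ((hAy z).pow 2)).div_const 32)).add
        (((hasDerivAt_id' z).mul ((hAy z).pow 4)).div_const 16) |>.add
        (((hAy z).pow 6).div_const 32)
    refine H.congr_deriv ?_
    simp only [Pi.pow_apply]
    ring
  have hEdiff : Differentiable ℝ
      (fun z => (deriv A z)^2/2 + z^2*(A z)^2/32 + z*(A z)^4/16 + (A z)^6/32) := by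
    fun_prop
  -- A nonneg on [0,n₁]
  have hA0cc : ∀ z ∈ Set.Icc (0:ℝ) n₁, 0 ≤ A z := by
    intro z hz
    rcases lt_or_eq_of_le hz.2 with h | h
    · exact (hpos z hz.1 h).le
    · rw [h, hzero]
  -- deriv A ≤ 0 on [0,n₁]
  have hanti1 : AntitoneOn (deriv A) (Set.Icc 0 n₁) := by
    apply antitoneOn_of_deriv_nonpos (convex_Icc 0 n₁) hd2.continuous.continuousOn
      (fun x _ => (hd2 x).differentiableWithinAt)
    intro x hx
    rw [interior_Icc] at hx
    rw [hODE x hx.1.le]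
    have hAx : 0 < A x := hpos x hx.1.le hx.2
    nlinarith [pow_pos hAx 3, pow_pos hAx 5, mul_pos (pow_pos hx.1 2) hAx,
      mul_pos hx.1 (pow_pos hAx 3)]
  have hA'np : ∀ z ∈ Set.Icc (0:ℝ) n₁, deriv A z ≤ 0 := by
    intro z hz
    have := hanti1 (Set.left_mem_Icc.2 hn₁.le) hz hz.1
    rwa [h'0] at this
  -- A ≤ A₀ on [0,n₁]
  have hanti2 : AntitoneOn A (Set.Icc 0 n₁) := by
    apply antitoneOn_of_deriv_nonpos (convex_Icc 0 n₁) hd1.continuous.continuousOn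
      (fun x _ => (hd1 x).differentiableWithinAt)
    intro x hx
    rw [interior_Icc] at hx
    exact hA'np x ⟨hx.1.le, hx.2.le⟩
  have hAle : ∀ z ∈ Set.Icc (0:ℝ) n₁, A z ≤ A₀ := by
    intro z hz
    have := hanti2 (Set.left_mem_Icc.2 hn₁.le) hz hz.1
    rwa [h0] at this
  -- energy bound at n₁
  have hganti : AntitoneOn (fun z => ((deriv A z)^2/2 + z^2*(A z)^2/32 + z*(A z)^4/16 + (A z)^6/32)
      - (z^2*A₀^2/32 + z*A₀^4/16 + A₀^6/32)) (Set.Icc 0 n₁) := by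
    apply antitoneOn_of_deriv_nonpos (convex_Icc 0 n₁)
    · apply Continuous.continuousOn
      have hc1 := hd1.continuous
      have hc2 := hd2.continuous
      fun_prop
    · intro x hx
      rw [interior_Icc] at hx
      exact ((hEdiff x).sub (by fun_prop)).differentiableWithinAt
    · intro x hx
      rw [interior_Icc] at hx
      have HG : HasDerivAt (fun z => ((deriv A z)^2/2 + z^2*(A z)^2/32 + z*(A z)^4/16 + (A z)^6/32)
          - (z^2*A₀^2/32 + z*A₀^4/16 + A₀^6/32))
          ((x*(A x)^2/16 + (A x)^4/16) - (2*x*A₀^2/32 + A₀^4/16)) x := by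
        have H2 : HasDerivAt (fun z : ℝ => z^2*A₀^2/32 + z*A₀^4/16 + A₀^6/32)
            (2*x*A₀^2/32 + A₀^4/16) x := by
          have := (((hasDerivAt_pow 2 x).mul_const (A₀^2)).div_const 32).add
            ((((hasDerivAt_id' x)).mul_const (A₀^4)).div_const 16) |>.add
            (hasDerivAt_const x (A₀^6/32))
          refine this.congr_deriv ?_
          ring
        exact (hE x hx.1.le).sub H2
      rw [HG.deriv]
      have h1 : 0 ≤ A x := hA0cc x ⟨hx.1.le, hx.2.le⟩
      have h2 : A x ≤ A₀ := hAle x ⟨hx.1.le, hx.2.le⟩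
      have h3 : x*(A x)^2 ≤ x*A₀^2 := by
        have hsq : (A x)^2 ≤ A₀^2 := by nlinarith
        exact mul_le_mul_of_nonneg_left hsq hx.1.le
      have h4 : (A x)^4 ≤ A₀^4 := pow_le_pow_left₀ h1 h2 4
      nlinarith
  have hB1 : (deriv A n₁)^2 ≤ n₁^2*A₀^2/16 + n₁*A₀^4/8 + A₀^6/16 := by
    have hg := hganti (Set.left_mem_Icc.2 hn₁.le) (Set.right_mem_Icc.2 hn₁.le) hn₁.le
    simp only at hg
    rw [h'0, h0, hzero] at hg
    nlinarith [hg]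
  -- the constraint on n₁
  have hCon : 2 ≤ n₁^4/16 + n₁^3*A₀^2/4 + 3*n₁^2*A₀^4/16 := by
    obtain ⟨K, hK⟩ : ∃ K : ℝ, K = n₁^2*A₀/16 + n₁*A₀^3/4 + 3*A₀^5/16 := ⟨_, rfl⟩
    have hmono1 : MonotoneOn (fun z => deriv A z + K*z) (Set.Icc 0 n₁) := by
      apply monotoneOn_of_deriv_nonneg (convex_Icc 0 n₁)
      · apply Continuous.continuousOn
        have hc2 := hd2.continuous
        fun_prop
      · intro x hx
        exact ((hd2 x).add (by fun_prop)).differentiableWithinAt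
      · intro x hx
        rw [interior_Icc] at hx
        have HG : HasDerivAt (fun z => deriv A z + K*z)
            (-(x ^ 2 / 16 * A x + x / 4 * A x ^ 3 + 3 / 16 * A x ^ 5) + K*1) x :=
          (hA'' x hx.1.le).add ((hasDerivAt_id' x).const_mul K)
        rw [HG.deriv]
        have h1 : 0 ≤ A x := hA0cc x ⟨hx.1.le, hx.2.le⟩
        have h2 : A x ≤ A₀ := hAle x ⟨hx.1.le, hx.2.le⟩
        have hx1 : 0 ≤ x := hx.1.le
        have hx2 : x ≤ n₁ := hx.2.le
        have hxsq : x^2 ≤ n₁^2 := by nlinarith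
        have b1 : x^2/16*(A x) ≤ n₁^2/16*A₀ := by
          nlinarith [mul_le_mul hxsq h2 h1 (sq_nonneg n₁)]
        have b2 : x/4*(A x)^3 ≤ n₁/4*A₀^3 := by
          nlinarith [mul_le_mul hx2 (pow_le_pow_left₀ h1 h2 3) (by positivity : (0:ℝ) ≤ (A x)^3) hn₁.le]
        have b3 : 3/16*(A x)^5 ≤ 3/16*A₀^5 := by
          nlinarith [pow_le_pow_left₀ h1 h2 5]
        rw [hK]
        nlinarith [b1, b2, b3]
    have hstep1 : ∀ z ∈ Set.Icc (0:ℝ) n₁, 0 ≤ deriv A z + K*z := by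
      intro z hz
      have := hmono1 (Set.left_mem_Icc.2 hn₁.le) hz hz.1
      simp only at this
      rw [h'0] at this
      norm_num at this
      linarith
    have hmono2 : MonotoneOn (fun z => A z + K*z^2/2) (Set.Icc 0 n₁) := by
      apply monotoneOn_of_deriv_nonneg (convex_Icc 0 n₁)
      · apply Continuous.continuousOn
        fun_prop
      · intro x hx
        exact ((hd1 x).add (by fun_prop)).differentiableWithinAt
      · intro x hx
        rw [interior_Icc] at hx
        have HG : HasDerivAt (fun z => A z + K*z^2/2) (deriv A x + K*x) x := by
          have := (hAy x).add (((hasDerivAt_pow 2 x).const_mul K).div_const 2)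
          refine this.congr_deriv ?_
          ring
        rw [HG.deriv]
        exact hstep1 x ⟨hx.1.le, hx.2.le⟩
    have hfin := hmono2 (Set.left_mem_Icc.2 hn₁.le) (Set.right_mem_Icc.2 hn₁.le) hn₁.le
    simp only at hfin
    rw [h0, hzero] at hfin
    norm_num at hfin
    have h2A : 2*A₀ ≤ K*n₁^2 := by linarith
    rw [hK] at h2A
    have e : (n₁^2*A₀/16 + n₁*A₀^3/4 + 3*A₀^5/16)*n₁^2
        = (n₁^4/16 + n₁^3*A₀^2/4 + 3*n₁^2*A₀^4/16)*A₀ := by ring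
    rw [e] at h2A
    exact le_of_mul_le_mul_right h2A hA₀
  -- monotone quantities on [n₁, ∞)
  have hq' : ∀ x : ℝ, 0 < x → HasDerivAt
      (fun z => ((deriv A z)^2/2 + z^2*(A z)^2/32 + z*(A z)^4/16 + (A z)^6/32)/z^2)
      (-((deriv A x)^2/x^3 + (A x)^4/(16*x^2) + (A x)^6/(16*x^3))) x := by
    intro x hx
    have H := (hE x hx.le).div (hasDerivAt_pow 2 x) (by positivity : x^2 ≠ 0)
    refine H.congr_deriv ?_
    field_simp
    ring
  have hqanti : AntitoneOn
      (fun z => ((deriv A z)^2/2 + z^2*(A z)^2/32 + z*(A z)^4/16 + (A z)^6/32)/z^2)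
      (Set.Ici n₁) := by
    apply antitoneOn_of_deriv_nonpos (convex_Ici n₁)
    · intro x hx
      have hx0 : (0:ℝ) < x := lt_of_lt_of_le hn₁ hx
      exact (hq' x hx0).differentiableAt.continuousAt.continuousWithinAt
    · intro x hx
      rw [interior_Ici] at hx
      exact (hq' x (lt_trans hn₁ hx)).differentiableAt.differentiableWithinAt
    · intro x hx
      rw [interior_Ici] at hx
      have hx0 : (0:ℝ) < x := lt_trans hn₁ hx
      rw [(hq' x hx0).deriv]
      have h1 : 0 ≤ (deriv A x)^2/x^3 + (A x)^4/(16*x^2) + (A x)^6/(16*x^3) := by positivity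
      linarith
  have hmanti : AntitoneOn (fun z => ((deriv A z)^2/2 + z^2*(A z)^2/32 + z*(A z)^4/16 + (A z)^6/32)/z
      + A z * deriv A z/(2*z^2) + (A z)^2/(2*z^3)) (Set.Ici n₁) := by
    have hm' : ∀ x : ℝ, 0 < x → HasDerivAt
        (fun z => ((deriv A z)^2/2 + z^2*(A z)^2/32 + z*(A z)^4/16 + (A z)^6/32)/z
          + A z * deriv A z/(2*z^2) + (A z)^2/(2*z^3))
        (-((A x)^4/(8*x) + (A x)^6/(8*x^2) + 3*(A x)^2/(2*x^4))) x := by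
      intro x hx
      have hx0 : x ≠ 0 := ne_of_gt hx
      have T1 := (hE x hx.le).div (hasDerivAt_id' x) hx0
      have T2 := ((hAy x).mul (hA'' x hx.le)).div ((hasDerivAt_pow 2 x).const_mul 2)
        (by positivity)
      have T3 := ((hAy x).pow 2).div ((hasDerivAt_pow 3 x).const_mul 2) (by positivity)
      have H := (T1.add T2).add T3
      refine H.congr_deriv ?_
      simp only [Pi.pow_apply, Pi.mul_apply]
      field_simp
      ring
    apply antitoneOn_of_deriv_nonpos (convex_Ici n₁)
    · intro x hx
      have hx0 : (0:ℝ) < x := lt_of_lt_of_le hn₁ hx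
      exact (hm' x hx0).differentiableAt.continuousAt.continuousWithinAt
    · intro x hx
      rw [interior_Ici] at hx
      exact (hm' x (lt_trans hn₁ hx)).differentiableAt.differentiableWithinAt
    · intro x hx
      rw [interior_Ici] at hx
      have hx0 : (0:ℝ) < x := lt_trans hn₁ hx
      rw [(hm' x hx0).deriv]
      have h1 : 0 ≤ (A x)^4/(8*x) + (A x)^6/(8*x^2) + 3*(A x)^2/(2*x^4) := by positivity
      linarith
  -- final assembly
  intro y hy
  have hy0 : 0 < y := lt_trans hn₁ hy
  set B₁ : ℝ := deriv A n₁ with hB₁def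
  set a : ℝ := A y with hadef
  set b : ℝ := deriv A y with hbdef
  set s : ℝ := A₀/4 + A₀^3/(4*n₁) with hsdef
  have hs0 : 0 < s := by rw [hsdef]; positivity
  have hSsq : (n₁*s)^2 = n₁^2*A₀^2/16 + n₁*A₀^4/8 + A₀^6/16 := by
    rw [hsdef]; field_simp; ring
  have hB1s : |B₁| ≤ n₁*s := by
    have hsq : B₁^2 ≤ (n₁*s)^2 := by rw [hSsq]; exact hB1
    exact abs_le.mpr (abs_le_of_sq_le_sq' hsq (mul_pos hn₁ hs0).le)
  set w : ℝ := |B₁|/n₁ with hwdef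
  have hw0 : 0 ≤ w := by positivity
  have hws : w ≤ s := by
    rw [hwdef, div_le_iff₀ hn₁]
    linarith
  have hwB : B₁^2 = n₁^2*w^2 := by
    rw [hwdef, div_pow, sq_abs]
    field_simp
  -- F2 from q-monotonicity
  have hqy := hqanti (Set.self_mem_Ici) (Set.mem_Ici.2 hy.le) hy.le
  simp only at hqy
  rw [hzero] at hqy
  have hqn : ((deriv A n₁)^2/2 + n₁^2*(0:ℝ)^2/32 + n₁*(0:ℝ)^4/16 + (0:ℝ)^6/32)/n₁^2 = w^2/2 := by
    rw [← hB₁def, hwB]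
    field_simp
    ring
  rw [hqn] at hqy
  have hF2 : b^2 + y^2*a^2/16 + y*a^4/8 + a^6/16 ≤ y^2*w^2 := by
    rw [div_le_iff₀ (by positivity : (0:ℝ) < y^2)] at hqy
    nlinarith [hqy]
  -- F1 from m-monotonicity
  have hmy := hmanti (Set.self_mem_Ici) (Set.mem_Ici.2 hy.le) hy.le
  simp only at hmy
  rw [hzero] at hmy
  have hmn : ((deriv A n₁)^2/2 + n₁^2*(0:ℝ)^2/32 + n₁*(0:ℝ)^4/16 + (0:ℝ)^6/32)/n₁
      + (0:ℝ) * deriv A n₁/(2*n₁^2) + (0:ℝ)^2/(2*n₁^3) = n₁*w^2/2 := by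
    rw [← hB₁def, hwB]
    field_simp
    ring
  rw [hmn] at hmy
  -- bounds on t = |a|, |b|
  set t : ℝ := |a| with htdef
  have ht0 : 0 ≤ t := abs_nonneg a
  have hya4 : 0 ≤ y*a^4 := mul_nonneg hy0.le (by positivity)
  have hy2a2 : 0 ≤ y^2*a^2 := by positivity
  have hb2' : 0 ≤ b^2 := sq_nonneg b
  have ha6 : 0 ≤ a^6 := by positivity
  have ht4 : t ≤ 4*w := by
    have ha2 : a^2 ≤ (4*w)^2 := by
      have h16 : y^2*(a^2) ≤ y^2*((4*w)^2) := by nlinarith [hF2]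
      exact le_of_mul_le_mul_left h16 (pow_pos hy0 2)
    exact abs_le.mpr (abs_le_of_sq_le_sq' ha2 (by linarith))
  have hbyw : -(a*b) ≤ t*(y*w) := by
    have hb2 : b^2 ≤ (y*w)^2 := by nlinarith [hF2]
    have hable : |b| ≤ y*w := abs_le.mpr (abs_le_of_sq_le_sq' hb2 (mul_nonneg hy0.le hw0))
    calc -(a*b) ≤ |a*b| := neg_le_abs (a*b)
      _ = |a| * |b| := abs_mul a b
      _ ≤ |a| * (y*w) := mul_le_mul_of_nonneg_left hable (abs_nonneg a)
  -- combine
  have ht4e : t^4 = a^4 := by rw [htdef, pow_abs, abs_of_nonneg (by positivity : (0:ℝ) ≤ a^4)]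
  have ht6e : t^6 = a^6 := by rw [htdef, pow_abs, abs_of_nonneg (by positivity : (0:ℝ) ≤ a^6)]
  have hEexp : ((b)^2/2 + y^2*(a)^2/32 + y*(a)^4/16 + (a)^6/32)/y
      = b^2/(2*y) + y*a^2/32 + a^4/16 + a^6/(32*y) := by
    field_simp
  have hG : b^2/(2*y) + y*a^2/32 ≤ n₁*w^2/2 + t*(y*w)/(2*y^2) - t^4/16 - t^6/(32*y) := by
    have ha2y : 0 ≤ a^2/(2*y^3) := by positivity
    have hcross : -(a*b)/(2*y^2) ≤ t*(y*w)/(2*y^2) := by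
      apply div_le_div_of_nonneg_right hbyw (by positivity)
    rw [hEexp] at hmy
    have : a*b/(2*y^2) = -(-(a*b)/(2*y^2)) := by ring
    rw [ht4e, ht6e]
    linarith [hmy, hcross, ha2y]
  have halg := alg_key n₁ A₀ s w t y hn₁ hA₀ hCon hsdef hw0 hws ht0 ht4 hy.le
  have htw : t*(y*w)/(2*y^2) = t*w/(2*y) := by
    field_simp
  have hGG : b^2/(2*y) + y*a^2/32 ≤ n₁*s^2/2 + A₀*s/(2*n₁) := by
    rw [htw] at hG
    linarith [hG, halg]
  -- rewrite the RHS
  have hsqrt : Real.sqrt (1/16*A₀^2 + 1/(8*n₁)*A₀^4 + 1/(16*n₁^2)*A₀^6) = s := by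
    rw [show (1/16*A₀^2 + 1/(8*n₁)*A₀^4 + 1/(16*n₁^2)*A₀^6) = s^2 by
      rw [hsdef]; field_simp; ring]
    exact Real.sqrt_sq hs0.le
  rw [hsqrt]
  have hRHS : n₁/32*A₀^2 + 1/16*A₀^4 + 1/(32*n₁)*A₀^6 = n₁*s^2/2 := by
    rw [hsdef]; field_simp; ring
  have e1 : 1/(2*y)*b^2 = b^2/(2*y) := by ring
  have e2 : y/32*a^2 = y*a^2/32 := by ring
  have e3 : 1/(2*n₁)*A₀*s = A₀*s/(2*n₁) := by ring
  rw [e1, e2, hRHS, e3]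
  exact hGG
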